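/- For any finite poset x with |x| ≥ 2, x has a minimal vertex possessing a single-parent child (i.e., a minimal element a and an element b whose unique lower cover is a) if and only if x can be grown from the 2-element chain by successively adjoining maximal elements. -/

import Mathlib

/-- A causet: a finite partial order on a finite set of labels. -/
structure Causet where
  carrier : Finset ℕ
  rel : ℕ → ℕ → Prop
  rel_mem : ∀ a b, rel a b → a ∈ carrier ∧ b ∈ carrier
  irrefl : ∀ a, ¬ rel a a
  trans : ∀ a b c, rel a b → rel b c → rel a c

namespace Causet

/-- A minimal vertex. -/
def Minimal (x : Causet) (a : ℕ) : Prop :=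
  a ∈ x.carrier ∧ ∀ b, ¬ x.rel b a

/-- A maximal vertex. -/
def Maximal (x : Causet) (a : ℕ) : Prop :=
  a ∈ x.carrier ∧ ∀ b, ¬ x.rel a b

/-- `a` is a parent of `b` (a lower cover). -/
def Parent (x : Causet) (a b : ℕ) : Prop :=
  x.rel a b ∧ ∀ c, ¬ (x.rel a c ∧ x.rel c b)

/-- `y` is obtained from `x` by adjoining the single new element `a`, maximal in `y`. -/
def ProducesWith (x y : Causet) (a : ℕ) : Prop :=
  a ∉ x.carrier ∧ y.carrier = insert a x.carrier ∧ y.Maximal a ∧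
    ∀ u v, u ∈ x.carrier → v ∈ x.carrier → (y.rel u v ↔ x.rel u v)

/-- `x → y`: `y` is obtained from `x` by adjoining a single maximal element. -/
def Produces (x y : Causet) : Prop := ∃ a, ProducesWith x y a

/-- `y` is a product of `x`: `y = x` or there is a chain of productions from `x` to `y`. -/
def ProductOf (x y : Causet) : Prop := Relation.ReflTransGen Produces x y

/-- `x` is (a copy of) the 2-element chain. -/
def IsTwoChain (x : Causet) : Prop :=
  ∃ a b, a ≠ b ∧ x.carrier = {a, b} ∧ x.rel a b ∧ ∀ u v, x.rel u v → u = a ∧ v = b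

/-- `x` is (a copy of) the 2-element antichain. -/
def IsTwoAntichain (x : Causet) : Prop :=
  ∃ a b, a ≠ b ∧ x.carrier = {a, b} ∧ ∀ u v, ¬ x.rel u v

/-- `x` has at least two minimal vertices. -/
def TwoMinimal (x : Causet) : Prop :=
  ∃ a b, a ≠ b ∧ x.Minimal a ∧ x.Minimal b

/-- The minimal vertex `a` has a single-parent child (a child whose unique parent is `a`). -/
def MinWithSPC (x : Causet) (a : ℕ) : Prop :=
  x.Minimal a ∧ ∃ c, x.Parent a c ∧ ∀ d, x.Parent d c → d = a

/-- `x` is mixed: at least two minimal vertices, at least one of which has a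
single-parent child. -/
def Mixed (x : Causet) : Prop :=
  TwoMinimal x ∧ ∃ a, MinWithSPC x a

end Causet

/-- Any nonempty finite set has a minimal element for an irreflexive transitive relation. -/
private lemma exists_rel_min (r : ℕ → ℕ → Prop) (hirr : ∀ a, ¬ r a a)
    (htr : ∀ a b c, r a b → r b c → r a c) :
    ∀ n (P : Finset ℕ), P.card = n → P.Nonempty → ∃ e ∈ P, ∀ f ∈ P, ¬ r f e := by
  intro n
  induction n using Nat.strong_induction_on with
  | _ n ih =>
    intro P hcard hne
    classical
    obtain ⟨d, hd⟩ := hne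
    by_cases h : ∀ f ∈ P, ¬ r f d
    · exact ⟨d, hd, h⟩
    · push_neg at h
      obtain ⟨f, hf, hfd⟩ := h
      set P' := P.filter (fun e => r e d) with hP'
      have hfP' : f ∈ P' := Finset.mem_filter.2 ⟨hf, hfd⟩
      have hd' : d ∉ P' := fun hmem => hirr d (Finset.mem_filter.1 hmem).2
      have hlt : P'.card < n := by
        rw [← hcard]
        exact Finset.card_lt_card ⟨Finset.filter_subset _ _, fun hs => hd' (hs hd)⟩
      obtain ⟨e, heP', hemin⟩ := ih P'.card hlt P' rfl ⟨f, hfP'⟩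
      refine ⟨e, (Finset.mem_filter.1 heP').1, ?_⟩
      intro g hg hge
      have hgd : r g d := htr _ _ _ hge (Finset.mem_filter.1 heP').2
      exact hemin g (Finset.mem_filter.2 ⟨hg, hgd⟩) hge

private def Causet.restrict (x : Causet) (S : Finset ℕ) : Causet where
  carrier := S ∩ x.carrier
  rel u v := x.rel u v ∧ u ∈ S ∧ v ∈ S
  rel_mem a b h := ⟨Finset.mem_inter.2 ⟨h.2.1, (x.rel_mem a b h.1).1⟩,
    Finset.mem_inter.2 ⟨h.2.2, (x.rel_mem a b h.1).2⟩⟩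
  irrefl a h := x.irrefl a h.1
  trans a b c h1 h2 := ⟨x.trans _ _ _ h1.1 h2.1, h1.2.1, h2.2.2⟩

private lemma Causet.ext' {x y : Causet} (h1 : x.carrier = y.carrier)
    (h2 : x.rel = y.rel) : x = y := by
  cases x; cases y
  cases h1; cases h2
  rfl

private lemma restrict_self (x : Causet) : x.restrict x.carrier = x := by
  apply Causet.ext'
  · exact Finset.inter_self _
  · funext u v
    apply propext
    constructor
    · exact fun h => h.1
    · intro h; exact ⟨h, (x.rel_mem u v h).1, (x.rel_mem u v h).2⟩

private lemma grow (x : Causet) :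
    ∀ n (S T : Finset ℕ), (T \ S).card = n → S ⊆ T → T ⊆ x.carrier →
      (∀ u v, x.rel u v → v ∈ S → u ∈ S) →
      (∀ u v, x.rel u v → v ∈ T → u ∈ T) →
      (x.restrict S).ProductOf (x.restrict T) := by
  intro n
  induction n with
  | zero =>
    intro S T h hST _ _ _
    have hSeqT : S = T := by
      apply Finset.Subset.antisymm hST
      intro t ht
      by_contra hts
      have hmem : t ∈ T \ S := Finset.mem_sdiff.2 ⟨ht, hts⟩
      rw [Finset.card_eq_zero] at h
      rw [h] at hmem
      exact absurd hmem (Finset.notMem_empty t)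
    rw [hSeqT]
    exact Relation.ReflTransGen.refl
  | succ n ih =>
    intro S T h hST hTc hSd hTd
    have hne : (T \ S).Nonempty := Finset.card_pos.1 (by omega)
    obtain ⟨v, hvP, hvmin⟩ := exists_rel_min x.rel x.irrefl x.trans _ (T \ S) rfl hne
    obtain ⟨hvT, hvS⟩ := Finset.mem_sdiff.1 hvP
    have hvc : v ∈ x.carrier := hTc hvT
    set S' := insert v S with hS'
    have hS'T : S' ⊆ T := Finset.insert_subset hvT hST
    have hS'd : ∀ u w, x.rel u w → w ∈ S' → u ∈ S' := by
      intro u w huw hw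
      rcases Finset.mem_insert.1 hw with rfl | hwS
      · have huT : u ∈ T := hTd u w huw hvT
        by_cases huS : u ∈ S
        · exact Finset.mem_insert_of_mem huS
        · exact absurd huw (hvmin u (Finset.mem_sdiff.2 ⟨huT, huS⟩))
      · exact Finset.mem_insert_of_mem (hSd u w huw hwS)
    have hcard : (T \ S').card = n := by
      have heq : T \ S' = (T \ S).erase v := by
        ext t
        simp only [hS', Finset.mem_sdiff, Finset.mem_erase, Finset.mem_insert, not_or]
        tauto
      rw [heq, Finset.card_erase_of_mem hvP, h]
      omega
    have hstep : (x.restrict S).Produces (x.restrict S') := by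
      refine ⟨v, ?_, ?_, ⟨?_, ?_⟩, ?_⟩
      · intro hv; exact hvS (Finset.mem_inter.1 hv).1
      · show S' ∩ x.carrier = insert v (S ∩ x.carrier)
        rw [hS', Finset.insert_inter_of_mem hvc]
      · exact Finset.mem_inter.2 ⟨Finset.mem_insert_self _ _, hvc⟩
      · intro b hb
        obtain ⟨hvb, -, hbS'⟩ := hb
        rcases Finset.mem_insert.1 hbS' with rfl | hbS
        · exact x.irrefl _ hvb
        · exact hvS (hSd v b hvb hbS)
      · intro u w hu hw
        have huS := (Finset.mem_inter.1 hu).1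
        have hwS := (Finset.mem_inter.1 hw).1
        constructor
        · rintro ⟨h1, -, -⟩; exact ⟨h1, huS, hwS⟩
        · rintro ⟨h1, -, -⟩
          exact ⟨h1, Finset.mem_insert_of_mem huS, Finset.mem_insert_of_mem hwS⟩
    exact Relation.ReflTransGen.head hstep (ih S' T hcard hS'T hTc hS'd hTd)

/-- If `a` is minimal with unique-parent child `c`, anything strictly below `c` is `a`. -/
private lemma parent_below (x : Causet) {a c d : ℕ} (ha : x.Minimal a)
    (hu : ∀ e, x.Parent e c → e = a) (hd : x.rel d c) : d = a := by
  classical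
  set P := x.carrier.filter (fun e => x.rel e c ∧ (e = d ∨ x.rel d e)) with hP
  have hdP : d ∈ P := Finset.mem_filter.2 ⟨(x.rel_mem d c hd).1, hd, Or.inl rfl⟩
  obtain ⟨e, heP, hemax⟩ := exists_rel_min (fun u v => x.rel v u) x.irrefl
    (fun a b c h1 h2 => x.trans _ _ _ h2 h1) _ P rfl ⟨d, hdP⟩
  obtain ⟨heC, hec, hde⟩ := Finset.mem_filter.1 heP
  have hpe : x.Parent e c := by
    refine ⟨hec, ?_⟩
    rintro f ⟨hef, hfc⟩
    have hdf : x.rel d f := by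
      rcases hde with rfl | hh
      · exact hef
      · exact x.trans _ _ _ hh hef
    have hfP : f ∈ P := Finset.mem_filter.2 ⟨(x.rel_mem f c hfc).1, hfc, Or.inr hdf⟩
    exact hemax f hfP hef
  have hea : e = a := hu e hpe
  rcases hde with rfl | hde'
  · exact hea
  · rw [hea] at hde'
    exact absurd hde' (ha.2 d)

private lemma preserve (x y : Causet) (h : x.Produces y)
    (hx : ∃ a, Causet.MinWithSPC x a) : ∃ a, Causet.MinWithSPC y a := by
  obtain ⟨e, he1, he2, ⟨heM, heMax⟩, he4⟩ := h
  obtain ⟨a, ⟨⟨haC, haMin⟩, c, ⟨hac, hacP⟩, hu⟩⟩ := hx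
  have haY : a ∈ y.carrier := he2 ▸ Finset.mem_insert_of_mem haC
  have hcC : c ∈ x.carrier := (x.rel_mem a c hac).2
  have hcY : c ∈ y.carrier := he2 ▸ Finset.mem_insert_of_mem hcC
  refine ⟨a, ⟨haY, ?_⟩, c, ⟨(he4 a c haC hcC).2 hac, ?_⟩, ?_⟩
  · intro u hua
    have huY := (y.rel_mem u a hua).1
    rw [he2] at huY
    rcases Finset.mem_insert.1 huY with rfl | huC
    · exact heMax a hua
    · exact haMin u ((he4 u a huC haC).1 hua)
  · rintro f ⟨haf, hfc⟩
    have hfY := (y.rel_mem a f haf).2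
    rw [he2] at hfY
    rcases Finset.mem_insert.1 hfY with rfl | hfC
    · exact heMax c hfc
    · exact hacP f ⟨(he4 a f haC hfC).1 haf, (he4 f c hfC hcC).1 hfc⟩
  · rintro d ⟨hdc, hdP⟩
    have hdY := (y.rel_mem d c hdc).1
    rw [he2] at hdY
    rcases Finset.mem_insert.1 hdY with rfl | hdC
    · exact absurd hdc (heMax c)
    · apply hu d
      refine ⟨(he4 d c hdC hcC).1 hdc, ?_⟩
      rintro f ⟨hdf, hfc⟩
      have hfC : f ∈ x.carrier := (x.rel_mem d f hdf).2
      exact hdP f ⟨(he4 d f hdC hfC).2 hdf, (he4 f c hfC hcC).2 hfc⟩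

private lemma twochain_spc (z : Causet) (h : z.IsTwoChain) :
    ∃ a, z.MinWithSPC a := by
  obtain ⟨a, b, hab, hcar, hrel, hch⟩ := h
  refine ⟨a, ⟨⟨by simp [hcar], ?_⟩, b, ⟨hrel, ?_⟩, ?_⟩⟩
  · intro u hu
    exact hab (hch u a hu).2
  · rintro c ⟨hac, hcb⟩
    have hcb' := (hch a c hac).2
    rw [hcb'] at hcb
    exact z.irrefl b hcb
  · rintro d ⟨hdb, -⟩
    exact (hch d b hdb).1

/-- A finite poset `x` with `|x| ≥ 2` has a minimal vertex possessing a
single-parent child iff `x` can be grown from the 2-element chain by successively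
adjoining maximal elements. -/
theorem stmt0 (x : Causet) (hx : 2 ≤ x.carrier.card) :
    (∃ a, Causet.MinWithSPC x a) ↔ ∃ z : Causet, z.IsTwoChain ∧ z.ProductOf x := by
  constructor
  · rintro ⟨a, ⟨haC, haMin⟩, c, hpc, hu⟩
    have hac : x.rel a c := hpc.1
    have hcC : c ∈ x.carrier := (x.rel_mem a c hac).2
    have hane : a ≠ c := fun h => x.irrefl a (h ▸ hac)
    have hpair : ({a, c} : Finset ℕ) ⊆ x.carrier := by
      intro t ht
      rcases Finset.mem_insert.1 ht with rfl | ht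
      · exact haC
      · rw [Finset.mem_singleton.1 ht]; exact hcC
    have hpairD : ∀ u v, x.rel u v → v ∈ ({a, c} : Finset ℕ) → u ∈ ({a, c} : Finset ℕ) := by
      intro u v huv hv
      rcases Finset.mem_insert.1 hv with rfl | hv
      · exact absurd huv (haMin u)
      · rw [Finset.mem_singleton.1 hv] at huv
        have := parent_below x ⟨haC, haMin⟩ hu huv
        rw [this]; exact Finset.mem_insert_self _ _
    refine ⟨x.restrict {a, c}, ?_, ?_⟩
    · refine ⟨a, c, hane, ?_, ⟨hac, by simp, by simp⟩, ?_⟩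
      · show ({a, c} : Finset ℕ) ∩ x.carrier = {a, c}
        exact Finset.inter_eq_left.2 hpair
      · rintro u v ⟨huv, hu', hv'⟩
        have hu2 : u = a ∨ u = c := by simpa using hu'
        have hv2 : v = a ∨ v = c := by simpa using hv'
        rcases hu2 with h1 | h1 <;> rcases hv2 with h2 | h2
        · rw [h1, h2] at huv; exact absurd huv (x.irrefl a)
        · exact ⟨h1, h2⟩
        · rw [h1, h2] at huv; exact absurd huv (haMin c)
        · rw [h1, h2] at huv; exact absurd huv (x.irrefl c)
    · have h1 : (x.restrict {a, c}).ProductOf (x.restrict x.carrier) :=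
        grow x _ {a, c} x.carrier rfl hpair (Finset.Subset.refl _) hpairD
          (fun u v huv _ => (x.rel_mem u v huv).1)
      rwa [restrict_self] at h1
  · rintro ⟨z, hz, hprod⟩
    have hbase : ∃ a, z.MinWithSPC a := twochain_spc z hz
    clear hx
    induction hprod with
    | refl => exact hbase
    | tail _ step ih => exact preserve _ _ step ih
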